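/- arXiv:1403.4111 — 3 statements merged into one kernel-verified Lean document; each statement's English description precedes it below -/
import Mathlib

section
/- Fix τ > 0 and define the kernel q^τ(x,y) = (1/τ)(x+τ−y)·1_{[x,x+τ]}(y). The induced integral operator T^τ f(x) = ∫₀^∞ q^τ(x,y) f'(y) dy is an everywhere-defined bounded linear operator on H_w; more precisely, for every f ∈ H_w, (T^τ f)'(x) = (f(x+τ)−f(x))/τ − f'(x) and ∫₀^∞ w(x) ((T^τ f)'(x)+f'(x))² dx ≤ ∫₀^∞ w(y) f'(y)² dy, so ‖T^τ f‖_w ≤ ‖T^τ f + f‖_w + ‖f‖_w < ∞. -/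
open MeasureTheory Set Filter

noncomputable section

/-- Inner product on the Filipović space `H_w`, for functions `g, h` with chosen
(weak) derivatives `g', h'`:  `⟨g,h⟩_w = g(0)h(0) + ∫₀^∞ w g' h'`. -/
def wInner (w g g' h h' : ℝ → ℝ) : ℝ :=
  g 0 * h 0 + ∫ x in Ioi (0:ℝ), w x * g' x * h' x

/-- Norm on the Filipović space `H_w`. -/
def wNorm (w g g' : ℝ → ℝ) : ℝ := Real.sqrt (wInner w g g' g g')

/-- `w : ℝ≥0 → [1,∞)` continuous, increasing, with `w 0 = 1`. -/
structure IsWeight (w : ℝ → ℝ) : Prop where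
  cont : ContinuousOn w (Ici 0)
  mono : MonotoneOn w (Ici 0)
  one_le : ∀ x ∈ Ici (0:ℝ), 1 ≤ w x
  at_zero : w 0 = 1

/-- `g ∈ H_w` with derivative `g'`: `g` is absolutely continuous on `[0,∞)` with
a.e. derivative `g'`, and `∫₀^∞ w (g')² < ∞`. -/
def MemHw (w g g' : ℝ → ℝ) : Prop :=
  (∀ x ∈ Ici (0:ℝ), g x = g 0 + ∫ t in Ioc (0:ℝ) x, g' t) ∧
  (∀ x ∈ Ici (0:ℝ), IntegrableOn g' (Ioc 0 x)) ∧
  IntegrableOn (fun x => w x * g' x ^ 2) (Ioi 0)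

/-- The reproducing kernel `h_x(y) = 1 + ∫₀^{min(x,y)} 1/w(s) ds`. -/
def hker (w : ℝ → ℝ) (x y : ℝ) : ℝ := 1 + ∫ s in Ioc (0:ℝ) (min x y), 1 / w s

/-- Derivative of `h_x`. -/
def hker' (w : ℝ → ℝ) (x : ℝ) : ℝ → ℝ := (Iic x).indicator (fun s => 1 / w s)

/-- The delivery-period kernel `q^τ(x,y) = (1/τ)(x+τ−y)·1_{[x,x+τ]}(y)`. -/
def qtau (τ x y : ℝ) : ℝ :=
  (1 / τ) * (x + τ - y) * (Icc x (x + τ)).indicator (fun _ => (1:ℝ)) y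


section Aux

open scoped ENNReal

private lemma cs2 {μ : Measure ℝ} {u v : ℝ → ℝ} (hu : MemLp u 2 μ) (hv : MemLp v 2 μ) :
    (∫ x, u x * v x ∂μ)^2 ≤ (∫ x, u x^2 ∂μ) * (∫ x, v x^2 ∂μ) := by
  have h2 : Real.HolderConjugate 2 2 := ⟨by norm_num, by norm_num, by norm_num⟩
  have hu' : MemLp u (ENNReal.ofReal (2:ℝ)) μ := by
    rw [show ENNReal.ofReal (2:ℝ) = 2 by norm_num [ENNReal.ofReal]]; exact hu
  have hv' : MemLp v (ENNReal.ofReal (2:ℝ)) μ := by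
    rw [show ENNReal.ofReal (2:ℝ) = 2 by norm_num [ENNReal.ofReal]]; exact hv
  have h := MeasureTheory.integral_mul_norm_le_Lp_mul_Lq h2 hu' hv'
  have hs : ∀ g : ℝ → ℝ, (∫ x, ‖g x‖ ^ (2:ℝ) ∂μ) = ∫ x, g x ^ 2 ∂μ := by
    intro g
    refine integral_congr_ae (Filter.Eventually.of_forall fun x => ?_)
    show ‖g x‖ ^ (2:ℝ) = _
    rw [show ((2:ℝ)) = ((2:ℕ):ℝ) by norm_num, Real.rpow_natCast, Real.norm_eq_abs, sq_abs]
  rw [hs, hs] at h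
  have h1 : |∫ x, u x * v x ∂μ| ≤ ∫ x, ‖u x‖ * ‖v x‖ ∂μ := by
    calc |∫ x, u x * v x ∂μ| ≤ ∫ x, ‖u x * v x‖ ∂μ := by
          simpa using norm_integral_le_integral_norm (fun x => u x * v x) (μ := μ)
      _ = ∫ x, ‖u x‖ * ‖v x‖ ∂μ := by simp [norm_mul]
  have hA : (0:ℝ) ≤ ∫ x, u x ^ 2 ∂μ := integral_nonneg fun x => sq_nonneg _
  have hB : (0:ℝ) ≤ ∫ x, v x ^ 2 ∂μ := integral_nonneg fun x => sq_nonneg _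
  have hle := h1.trans h
  calc (∫ x, u x * v x ∂μ)^2 = |∫ x, u x * v x ∂μ|^2 := (sq_abs _).symm
    _ ≤ ((∫ x, u x ^ 2 ∂μ) ^ (1/(2:ℝ)) * (∫ x, v x ^ 2 ∂μ) ^ (1/(2:ℝ)))^2 := by
        apply pow_le_pow_left₀ (abs_nonneg _) hle
    _ = (∫ x, u x ^ 2 ∂μ) * (∫ x, v x ^ 2 ∂μ) := by
        rw [mul_pow, ← Real.rpow_natCast (_ ^ (1/(2:ℝ))) 2, ← Real.rpow_natCast (_ ^ (1/(2:ℝ))) 2,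
          ← Real.rpow_mul hA, ← Real.rpow_mul hB]
        norm_num

private lemma tri (h0 f0 P Q R : ℝ) (hP : 0 ≤ P) (hQ : 0 ≤ Q)
    (hR : |R| ≤ Real.sqrt P * Real.sqrt Q) :
    Real.sqrt ((h0 - f0) * (h0 - f0) + (P - 2*R + Q)) ≤
      Real.sqrt (h0 * h0 + P) + Real.sqrt (f0 * f0 + Q) := by
  set A := Real.sqrt (h0 * h0 + P) with hA
  set B := Real.sqrt (f0 * f0 + Q) with hB
  have hA0 : 0 ≤ A := Real.sqrt_nonneg _
  have hB0 : 0 ≤ B := Real.sqrt_nonneg _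
  have hA2 : A ^ 2 = h0 * h0 + P := Real.sq_sqrt (by nlinarith [mul_self_nonneg h0])
  have hB2 : B ^ 2 = f0 * f0 + Q := Real.sq_sqrt (by nlinarith [mul_self_nonneg f0])
  have hsP : Real.sqrt P ^ 2 = P := Real.sq_sqrt hP
  have hsQ : Real.sqrt Q ^ 2 = Q := Real.sq_sqrt hQ
  have hsP0 : 0 ≤ Real.sqrt P := Real.sqrt_nonneg _
  have hsQ0 : 0 ≤ Real.sqrt Q := Real.sqrt_nonneg _
  have hAB : |h0| * |f0| + Real.sqrt P * Real.sqrt Q ≤ A * B := by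
    have h1 : (|h0| * |f0| + Real.sqrt P * Real.sqrt Q) ^ 2 ≤ (A * B) ^ 2 := by
      have e1 : |h0| ^ 2 = h0 * h0 := by rw [sq_abs]; ring
      have e2 : |f0| ^ 2 = f0 * f0 := by rw [sq_abs]; ring
      nlinarith [sq_nonneg (|h0| * Real.sqrt Q - |f0| * Real.sqrt P), abs_nonneg h0,
        abs_nonneg f0, mul_nonneg (abs_nonneg h0) (abs_nonneg f0),
        mul_nonneg hsP0 hsQ0]
    have h2 : 0 ≤ |h0| * |f0| + Real.sqrt P * Real.sqrt Q := by positivity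
    nlinarith [mul_nonneg hA0 hB0]
  have key : (h0 - f0) * (h0 - f0) + (P - 2*R + Q) ≤ (A + B) ^ 2 := by
    have habs : R ≤ |R| := le_abs_self R
    have habs2 : -|R| ≤ R := neg_abs_le R
    have hh : h0 * f0 ≤ |h0| * |f0| := by
      calc h0 * f0 ≤ |h0 * f0| := le_abs_self _
        _ = |h0| * |f0| := abs_mul _ _
    have hh2 : -(h0 * f0) ≤ |h0| * |f0| := by
      calc -(h0 * f0) ≤ |h0 * f0| := neg_le_abs _
        _ = |h0| * |f0| := abs_mul _ _
    nlinarith [hAB, hR]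
  calc Real.sqrt ((h0 - f0) * (h0 - f0) + (P - 2*R + Q)) ≤ Real.sqrt ((A + B) ^ 2) :=
        Real.sqrt_le_sqrt key
    _ = A + B := Real.sqrt_sq (by positivity)

variable {w f f' : ℝ → ℝ} {τ : ℝ}

private lemma ioi_eq_iUnion : Ioi (0:ℝ) = ⋃ n : ℕ, Ioc (0:ℝ) (n+1) := by
  ext x
  simp only [mem_Ioi, mem_iUnion, mem_Ioc]
  constructor
  · intro hx
    obtain ⟨n, hn⟩ := exists_nat_ge x
    exact ⟨n, hx, by linarith⟩
  · rintro ⟨n, hx, -⟩; exact hx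

private lemma L1 (hf : MemHw w f f') :
    AEStronglyMeasurable f' (volume.restrict (Ioi (0:ℝ))) := by
  rw [ioi_eq_iUnion]
  rw [aestronglyMeasurable_iUnion_iff]
  intro n
  exact (hf.2.1 ((n:ℝ)+1) (mem_Ici.mpr (by positivity))).aestronglyMeasurable

private lemma L2 (hf : MemHw w f f') : ContinuousOn f (Ici (0:ℝ)) := by
  have hprim : ∀ b : ℝ, 0 ≤ b →
      ContinuousOn (fun x => f 0 + ∫ t in Ioc (0:ℝ) x, f' t) (Icc 0 b) := by
    intro b hb
    refine continuousOn_const.add (intervalIntegral.continuousOn_primitive ?_)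
    rw [integrableOn_Icc_iff_integrableOn_Ioc]
    exact hf.2.1 b hb
  intro x hx
  have hx' : (0:ℝ) ≤ x := hx
  have h1 : ContinuousWithinAt (fun x => f 0 + ∫ t in Ioc (0:ℝ) x, f' t) (Ici 0) x := by
    have hmem : Icc (0:ℝ) (x+1) ∈ nhdsWithin x (Ici 0) := by
      rw [show Icc (0:ℝ) (x+1) = Ici 0 ∩ Iic (x+1) by rw [Ici_inter_Iic]]
      exact Filter.inter_mem self_mem_nhdsWithin
        (mem_nhdsWithin_of_mem_nhds (Iic_mem_nhds (by linarith)))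
    refine ContinuousWithinAt.mono_of_mem_nhdsWithin ?_ hmem
    exact (hprim (x+1) (by linarith)).continuousWithinAt ⟨hx', by linarith⟩
  refine ContinuousWithinAt.congr h1 (fun y hy => (hf.1 y hy)) (hf.1 x hx)

private lemma L3 (hf : MemHw w f f') (a b : ℝ) (ha : 0 ≤ a) :
    IntegrableOn f (Ioc a b) volume := by
  rcases le_or_gt a b with hab | hab
  · have : IntegrableOn f (Icc a b) volume :=
      ((L2 hf).mono (Icc_subset_Ici_self.trans (Ici_subset_Ici.mpr ha))).integrableOn_Icc
    exact this.mono_set Ioc_subset_Icc_self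
  · rw [Ioc_eq_empty (not_lt.mpr hab.le)]
    exact integrableOn_empty

private lemma L4 (hf : MemHw w f f') (a b : ℝ) (ha : 0 ≤ a) (hab : a ≤ b) :
    (∫ t in Ioc a b, f' t) = f b - f a := by
  have hb : (0:ℝ) ≤ b := ha.trans hab
  have h1 : (∫ t in Ioc (0:ℝ) a, f' t) + (∫ t in Ioc a b, f' t) = ∫ t in Ioc (0:ℝ) b, f' t := by
    rw [← setIntegral_union (Ioc_disjoint_Ioc_of_le le_rfl) measurableSet_Ioc
      ((hf.2.1 b hb).mono_set (Ioc_subset_Ioc_right hab))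
      ((hf.2.1 b hb).mono_set (Ioc_subset_Ioc_left ha)), Ioc_union_Ioc_eq_Ioc ha hab]
  have e1 := hf.1 a ha
  have e2 := hf.1 b hb
  rw [e1, e2]
  linarith [h1]

private lemma L5 (hf : MemHw w f f') (hτ : 0 < τ) (x : ℝ) (hx : 0 ≤ x) :
    (∫ y in Ioi (0:ℝ), qtau τ x y * f' y) = (1/τ) * (∫ z in Ioc x (x+τ), f z) - f x := by
  have hb0 : (0:ℝ) ≤ x + τ := by linarith
  set I : Set ℝ := Ioc x (x+τ) with hI
  haveI : IsFiniteMeasure (volume.restrict I) :=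
    ⟨by rw [Measure.restrict_apply_univ, Real.volume_Ioc]; exact ENNReal.ofReal_lt_top⟩
  have hInt : IntegrableOn f' I := (hf.2.1 (x+τ) hb0).mono_set (Ioc_subset_Ioc_left hx)
  -- Step 1 : reduce to an integral over I
  have h1 : (∫ y in Ioi (0:ℝ), qtau τ x y * f' y)
      = ∫ y in I, (1/τ) * ((x + τ - y) * f' y) := by
    have hpt : ∀ y, qtau τ x y * f' y
        = (Icc x (x+τ)).indicator (fun y => (1/τ) * ((x+τ-y) * f' y)) y := by
      intro y
      by_cases h : y ∈ Icc x (x+τ)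
      · simp [qtau, indicator_of_mem h]; ring
      · simp [qtau, indicator_of_notMem h]
    have haeq : (Icc x (x+τ) ∩ Ioi 0 : Set ℝ) =ᵐ[volume] (I : Set ℝ) := by
      rw [MeasureTheory.ae_eq_set]
      constructor
      · refine measure_mono_null ?_ (measure_singleton x)
        rintro y ⟨⟨⟨hy1, hy2⟩, -⟩, hy4⟩
        simp only [hI, mem_Ioc, not_and, not_le, not_lt] at hy4
        rcases lt_or_eq_of_le hy1 with h | h
        · exact absurd hy2 (not_le.mpr (hy4 h))
        · simp [← h]
      · refine measure_mono_null ?_ (measure_empty (μ := volume))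
        rintro y ⟨hy1, hy2⟩
        exact hy2 ⟨⟨hy1.1.le, hy1.2⟩, lt_of_le_of_lt hx hy1.1⟩
    calc (∫ y in Ioi (0:ℝ), qtau τ x y * f' y)
        = ∫ y in Ioi (0:ℝ), (Icc x (x+τ)).indicator (fun y => (1/τ) * ((x+τ-y) * f' y)) y :=
          integral_congr_ae (Filter.Eventually.of_forall fun y => hpt y)
      _ = ∫ y in (Icc x (x+τ) ∩ Ioi 0 : Set ℝ), (1/τ) * ((x+τ-y) * f' y) := by
          rw [integral_indicator measurableSet_Icc,
            Measure.restrict_restrict measurableSet_Icc]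
      _ = ∫ y in I, (1/τ) * ((x + τ - y) * f' y) := by
          rw [Measure.restrict_congr_set haeq]
  -- Step 2 : Fubini
  have h3 : (∫ y in I, (x+τ-y) * f' y) = ∫ z in I, (f z - f x) := by
    set ν := volume.restrict I with hν
    set S : Set (ℝ × ℝ) := {q : ℝ × ℝ | q.2 ≤ q.1} with hS
    have hSm : MeasurableSet S := measurableSet_le measurable_snd measurable_fst
    set F : ℝ × ℝ → ℝ := S.indicator (fun q => f' q.2) with hF
    have hf'ν : AEStronglyMeasurable f' ν := hInt.aestronglyMeasurable
    have hFm : AEStronglyMeasurable F (ν.prod ν) := (hf'ν.comp_snd).indicator hSm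
    have hFzpt : ∀ z y : ℝ, F (z, y) = (Iic z).indicator f' y := by
      intro z y
      by_cases h : y ≤ z
      · simp [hF, hS, indicator, h]
      · simp [hF, hS, indicator, h]
    have hFz : ∀ z : ℝ, (fun y => F (z, y)) = (Iic z).indicator f' := by
      intro z; ext y; exact hFzpt z y
    have hFy : ∀ y : ℝ, (fun z => F (z, y)) = (Ici y).indicator (fun _ => f' y) := by
      intro y; ext z
      by_cases h : y ≤ z
      · simp [hF, hS, indicator, h]
      · simp [hF, hS, indicator, h]
    have hFi : Integrable F (ν.prod ν) := by
      refine (integrable_prod_iff hFm).2 ⟨?_, ?_⟩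
      · refine Filter.Eventually.of_forall fun z => ?_
        show Integrable (fun y => F (z, y)) ν
        rw [hFz z]
        exact hInt.indicator measurableSet_Iic
      · have hbd : ∀ z : ℝ, ‖∫ y, ‖F (z, y)‖ ∂ν‖ ≤ ∫ y, ‖f' y‖ ∂ν := by
          intro z
          rw [Real.norm_eq_abs, abs_of_nonneg (integral_nonneg fun y => norm_nonneg _)]
          refine integral_mono ?_ hInt.norm fun y => ?_
          · simp only [hFzpt]
            exact (hInt.indicator measurableSet_Iic).norm
          · rw [hFzpt z y]
            exact norm_indicator_le_norm_self f' y
        refine Integrable.mono' (integrable_const (∫ y, ‖f' y‖ ∂ν)) ?_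
          (Filter.Eventually.of_forall hbd)
        exact hFm.norm.integral_prod_right'
    have hswap : (∫ z, (∫ y, F (z, y) ∂ν) ∂ν) = ∫ y, (∫ z, F (z, y) ∂ν) ∂ν :=
      integral_integral_swap hFi
    have hL : (∫ z, (∫ y, F (z, y) ∂ν) ∂ν) = ∫ z in I, (f z - f x) := by
      refine setIntegral_congr_fun measurableSet_Ioc fun z hz => ?_
      rw [hFz z, integral_indicator measurableSet_Iic,
        Measure.restrict_restrict measurableSet_Iic]
      have hss : Iic z ∩ I = Ioc x z := by
        ext y
        simp only [mem_inter_iff, mem_Iic, hI, mem_Ioc]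
        constructor
        · rintro ⟨h1, h2, h3⟩; exact ⟨h2, h1⟩
        · rintro ⟨h1, h2⟩; exact ⟨h2, h1, h2.trans hz.2⟩
      rw [hss, L4 hf x z hx hz.1.le]
    have hR : (∫ y, (∫ z, F (z, y) ∂ν) ∂ν) = ∫ y in I, (x+τ-y) * f' y := by
      refine setIntegral_congr_fun measurableSet_Ioc fun y hy => ?_
      rw [hFy y, integral_indicator measurableSet_Ici,
        Measure.restrict_restrict measurableSet_Ici, integral_const]
      have hss : Ici y ∩ I = Icc y (x+τ) := by
        ext z
        simp only [mem_inter_iff, mem_Ici, hI, mem_Ioc, mem_Icc]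
        constructor
        · rintro ⟨h1, h2, h3⟩; exact ⟨h1, h3⟩
        · rintro ⟨h1, h2⟩; exact ⟨h1, lt_of_lt_of_le hy.1 h1, h2⟩
      rw [hss, measureReal_restrict_apply_univ, Real.volume_real_Icc_of_le (by linarith [hy.2]),
        smul_eq_mul]
    rw [hR.symm, ← hswap, hL]
  -- Step 3 : conclusion
  have h4 : (∫ z in I, (f z - f x)) = (∫ z in I, f z) - τ * f x := by
    rw [integral_sub (L3 hf x (x+τ) hx) (integrable_const _), integral_const,
      measureReal_restrict_apply_univ, Real.volume_real_Ioc_of_le (by linarith : x ≤ x + τ),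
      smul_eq_mul]
    ring_nf
    rfl
  rw [h1, integral_const_mul, h3, h4]
  field_simp

private lemma L6 (hw : IsWeight w) (hf : MemHw w f f') (hτ : 0 < τ) (x : ℝ) (hx : 0 ≤ x) :
    w x * ((f (x+τ) - f x)/τ) ^ 2 ≤ (1/τ) * ∫ t in Ioc x (x+τ), w t * f' t ^ 2 := by
  have hτ' : τ ≠ 0 := ne_of_gt hτ
  have hb0 : (0:ℝ) ≤ x + τ := by linarith
  set I : Set ℝ := Ioc x (x+τ) with hI
  have hsub : I ⊆ Ici (0:ℝ) := fun t ht => le_of_lt (lt_of_le_of_lt hx ht.1)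
  have hsub' : I ⊆ Ioi (0:ℝ) := fun t ht => lt_of_le_of_lt hx ht.1
  haveI : IsFiniteMeasure (volume.restrict I) :=
    ⟨by rw [Measure.restrict_apply_univ, Real.volume_Ioc]; exact ENNReal.ofReal_lt_top⟩
  have hwx : (1:ℝ) ≤ w x := hw.one_le x hx
  have hwI : ∀ t ∈ I, (1:ℝ) ≤ w t := fun t ht => hw.one_le t (hsub ht)
  have hInt : IntegrableOn f' I := (hf.2.1 (x+τ) hb0).mono_set (Ioc_subset_Ioc_left hx)
  have hD : f (x+τ) - f x = ∫ t in I, f' t := (L4 hf x (x+τ) hx (by linarith)).symm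
  set u : ℝ → ℝ := fun t => Real.sqrt (1 / w t) with hu
  set v : ℝ → ℝ := fun t => Real.sqrt (w t) * f' t with hv
  -- continuity facts
  have hwcont : ContinuousOn w I := hw.cont.mono hsub
  have hwne : ∀ t ∈ I, w t ≠ 0 := fun t ht => by linarith [hwI t ht]
  have hinvcont : ContinuousOn (fun t => 1 / w t) I :=
    continuousOn_const.div hwcont hwne
  have hucont : ContinuousOn u I := Real.continuous_sqrt.comp_continuousOn hinvcont
  have hvmeas : AEStronglyMeasurable v (volume.restrict I) :=
    (((Real.continuous_sqrt.comp_continuousOn hwcont)).aestronglyMeasurable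
      measurableSet_Ioc).mul hInt.aestronglyMeasurable
  -- integrability of squares
  have hinv_int : IntegrableOn (fun t => 1 / w t) I := by
    have : ContinuousOn (fun t => 1 / w t) (Icc x (x+τ)) :=
      continuousOn_const.div (hw.cont.mono (Icc_subset_Ici_self.trans (Ici_subset_Ici.mpr hx)))
        (fun t ht => by
          have := hw.one_le t (le_trans hx ht.1); linarith)
    exact this.integrableOn_Icc.mono_set Ioc_subset_Icc_self
  have hu2 : ∀ t ∈ I, u t ^ 2 = 1 / w t := fun t ht =>
    Real.sq_sqrt (div_nonneg zero_le_one (by linarith [hwI t ht]))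
  have hv2 : ∀ t ∈ I, v t ^ 2 = w t * f' t ^ 2 := fun t ht => by
    rw [hv, mul_pow, Real.sq_sqrt (by linarith [hwI t ht])]
  have hu2_int : IntegrableOn (fun t => u t ^ 2) I :=
    hinv_int.congr (((ae_restrict_iff' measurableSet_Ioc).2
      (Filter.Eventually.of_forall fun t ht => (hu2 t ht).symm)))
  have hwf2_int : IntegrableOn (fun t => w t * f' t ^ 2) I := hf.2.2.mono_set hsub'
  have hv2_int : IntegrableOn (fun t => v t ^ 2) I :=
    hwf2_int.congr (((ae_restrict_iff' measurableSet_Ioc).2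
      (Filter.Eventually.of_forall fun t ht => (hv2 t ht).symm)))
  have hmu : MemLp u 2 (volume.restrict I) :=
    (memLp_two_iff_integrable_sq (hucont.aestronglyMeasurable measurableSet_Ioc)).2 hu2_int
  have hmv : MemLp v 2 (volume.restrict I) :=
    (memLp_two_iff_integrable_sq hvmeas).2 hv2_int
  have hcs := cs2 hmu hmv
  -- identifications
  have huv : (∫ t in I, u t * v t) = ∫ t in I, f' t := by
    refine setIntegral_congr_fun measurableSet_Ioc fun t ht => ?_
    have hw0 : (0:ℝ) < w t := by linarith [hwI t ht]
    have hsq : Real.sqrt (w t) ≠ 0 := ne_of_gt (Real.sqrt_pos.mpr hw0)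
    show Real.sqrt (1 / w t) * (Real.sqrt (w t) * f' t) = f' t
    rw [one_div, Real.sqrt_inv]
    field_simp
  have hueq : (∫ t in I, u t ^ 2) = ∫ t in I, 1 / w t :=
    setIntegral_congr_fun measurableSet_Ioc fun t ht => hu2 t ht
  have hveq : (∫ t in I, v t ^ 2) = ∫ t in I, w t * f' t ^ 2 :=
    setIntegral_congr_fun measurableSet_Ioc fun t ht => hv2 t ht
  set J : ℝ := ∫ t in I, w t * f' t ^ 2 with hJ
  have hJ0 : 0 ≤ J := setIntegral_nonneg measurableSet_Ioc fun t ht =>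
    mul_nonneg (by linarith [hwI t ht]) (sq_nonneg _)
  -- bound on ∫ 1/w
  have hinv_bd : (∫ t in I, 1 / w t) ≤ τ * (1 / w x) := by
    have h1 : (∫ t in I, 1 / w t) ≤ ∫ _t in I, 1 / w x := by
      refine setIntegral_mono_on hinv_int (integrable_const _) measurableSet_Ioc
        fun t ht => ?_
      exact one_div_le_one_div_of_le (by linarith) (hw.mono hx (hsub ht) ht.1.le)
    have h2 : (∫ _t in I, (1 / w x : ℝ)) = τ * (1 / w x) := by
      rw [integral_const, measureReal_restrict_apply_univ,
        Real.volume_real_Ioc_of_le (by linarith : x ≤ x + τ), smul_eq_mul]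
      ring_nf
    linarith [h1, h2.le, h2.ge]
  set D : ℝ := ∫ t in I, f' t with hDset
  have key : D ^ 2 * w x ≤ τ * J := by
    have h3 : D ^ 2 ≤ (∫ t in I, 1 / w t) * J := by
      rw [← huv, ← hueq, ← hveq]
      exact hcs
    have h4 : (∫ t in I, 1 / w t) * J ≤ (τ * (1 / w x)) * J :=
      mul_le_mul_of_nonneg_right hinv_bd hJ0
    have hwx0 : (0:ℝ) < w x := by linarith
    calc D ^ 2 * w x ≤ ((τ * (1 / w x)) * J) * w x := by nlinarith
      _ = τ * J := by field_simp
  have hDf : (f (x+τ) - f x) = D := by rw [hD]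
  rw [hDf]
  calc w x * (D / τ) ^ 2 = (D ^ 2 * w x) * (1/τ^2) := by field_simp
    _ ≤ (τ * J) * (1/τ^2) := mul_le_mul_of_nonneg_right key (by positivity)
    _ = (1/τ) * J := by field_simp

private lemma L7 (hw : IsWeight w) (hf : MemHw w f f') (hτ : 0 < τ) :
    ∫⁻ x in Ioi (0:ℝ), ENNReal.ofReal (w x * ((f (x+τ) - f x)/τ)^2) ≤
      ENNReal.ofReal (∫ t in Ioi (0:ℝ), w t * f' t^2) := by
  have hτ' : τ ≠ 0 := ne_of_gt hτ
  set μ0 := volume.restrict (Ioi (0:ℝ)) with hμ0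
  have hφm : AEMeasurable (fun t => ENNReal.ofReal (w t * f' t^2)) μ0 :=
    ENNReal.measurable_ofReal.comp_aemeasurable hf.2.2.aestronglyMeasurable.aemeasurable
  have hφnn : 0 ≤ᵐ[μ0] fun t => w t * f' t ^ 2 :=
    (ae_restrict_iff' measurableSet_Ioi).2 (Filter.Eventually.of_forall fun t ht =>
      mul_nonneg (by linarith [hw.one_le t (mem_Ici.mpr (le_of_lt (mem_Ioi.mp ht)))]) (sq_nonneg _))
  set S : Set (ℝ × ℝ) := {p : ℝ × ℝ | p.1 < p.2 ∧ p.2 ≤ p.1 + τ} with hS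
  have hSm : MeasurableSet S :=
    (measurableSet_lt measurable_fst measurable_snd).inter
      (measurableSet_le measurable_snd (measurable_fst.add_const τ))
  set K : ℝ × ℝ → ℝ≥0∞ := S.indicator (fun p => ENNReal.ofReal (w p.2 * f' p.2 ^ 2)) with hK
  have hKm : AEMeasurable K (μ0.prod μ0) :=
    (hφm.comp_quasiMeasurePreserving Measure.quasiMeasurePreserving_snd).indicator hSm
  -- step 1 : pointwise bound via L6
  have hstep1 : (∫⁻ x in Ioi (0:ℝ), ENNReal.ofReal (w x * ((f (x+τ) - f x)/τ)^2)) ≤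
      ∫⁻ x, (ENNReal.ofReal (1/τ) * ∫⁻ t, K (x, t) ∂μ0) ∂μ0 := by
    refine lintegral_mono_ae ((ae_restrict_iff' measurableSet_Ioi).2
      (Filter.Eventually.of_forall fun x hx => ?_))
    have hx0 : (0:ℝ) ≤ x := le_of_lt hx
    have h6 := L6 hw hf hτ x hx0
    have hIint : IntegrableOn (fun t => w t * f' t ^ 2) (Ioc x (x+τ)) :=
      hf.2.2.mono_set (fun t ht => lt_of_le_of_lt hx0 ht.1)
    have hInn : 0 ≤ᵐ[volume.restrict (Ioc x (x+τ))] fun t => w t * f' t ^ 2 :=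
      (ae_restrict_iff' measurableSet_Ioc).2 (Filter.Eventually.of_forall fun t ht =>
        mul_nonneg (by linarith [hw.one_le t (le_of_lt (lt_of_le_of_lt hx0 ht.1))])
          (sq_nonneg _))
    have hKx : ∀ t : ℝ, K (x, t) = (Ioc x (x+τ)).indicator
        (fun t => ENNReal.ofReal (w t * f' t ^ 2)) t := by
      intro t
      by_cases h : t ∈ Ioc x (x+τ)
      · rw [indicator_of_mem h]
        have : (x, t) ∈ S := ⟨h.1, h.2⟩
        rw [hK, indicator_of_mem this]
      · rw [indicator_of_notMem h, hK, indicator_of_notMem]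
        intro hc
        exact h ⟨hc.1, hc.2⟩
    have hKint : (∫⁻ t, K (x, t) ∂μ0) = ∫⁻ t in Ioc x (x+τ), ENNReal.ofReal (w t * f' t ^ 2) := by
      simp_rw [hKx]
      rw [lintegral_indicator measurableSet_Ioc, hμ0,
        Measure.restrict_restrict measurableSet_Ioc,
        inter_eq_left.mpr (show Ioc x (x+τ) ⊆ Ioi 0 from fun t ht => lt_of_le_of_lt hx0 ht.1)]
    calc ENNReal.ofReal (w x * ((f (x+τ) - f x)/τ)^2)
        ≤ ENNReal.ofReal ((1/τ) * ∫ t in Ioc x (x+τ), w t * f' t ^ 2) :=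
          ENNReal.ofReal_le_ofReal h6
      _ = ENNReal.ofReal (1/τ) * ENNReal.ofReal (∫ t in Ioc x (x+τ), w t * f' t ^ 2) :=
          ENNReal.ofReal_mul (by positivity)
      _ = ENNReal.ofReal (1/τ) * ∫⁻ t in Ioc x (x+τ), ENNReal.ofReal (w t * f' t ^ 2) := by
          rw [ofReal_integral_eq_lintegral_ofReal hIint hInn]
      _ = ENNReal.ofReal (1/τ) * ∫⁻ t, K (x, t) ∂μ0 := by rw [hKint]
  -- step 2 : swap
  have hswap : (∫⁻ x, (∫⁻ t, K (x, t) ∂μ0) ∂μ0) = ∫⁻ t, (∫⁻ x, K (x, t) ∂μ0) ∂μ0 :=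
    lintegral_lintegral_swap hKm
  -- step 3 : inner integral bound
  have hinner : ∀ t : ℝ, (∫⁻ x, K (x, t) ∂μ0) ≤
      ENNReal.ofReal (w t * f' t ^ 2) * ENNReal.ofReal τ := by
    intro t
    have hKt : ∀ x : ℝ, K (x, t) = (Ico (t-τ) t).indicator
        (fun _ => ENNReal.ofReal (w t * f' t ^ 2)) x := by
      intro x
      by_cases h : x ∈ Ico (t-τ) t
      · rw [indicator_of_mem h, hK, indicator_of_mem]
        exact ⟨h.2, by linarith [h.1]⟩
      · rw [indicator_of_notMem h, hK, indicator_of_notMem]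
        intro hc
        exact h ⟨by linarith [hc.2], hc.1⟩
    simp_rw [hKt]
    rw [lintegral_indicator measurableSet_Ico, setLIntegral_const]
    refine mul_le_mul_right ?_ _
    calc μ0 (Ico (t-τ) t) ≤ volume (Ico (t-τ) t) := by
          rw [hμ0, Measure.restrict_apply measurableSet_Ico]
          exact measure_mono inter_subset_left
      _ = ENNReal.ofReal τ := by rw [Real.volume_Ico]; norm_num
  -- assemble
  have hfin : (∫⁻ t, ENNReal.ofReal (w t * f' t ^ 2) ∂μ0) =
      ENNReal.ofReal (∫ t in Ioi (0:ℝ), w t * f' t ^ 2) :=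
    (ofReal_integral_eq_lintegral_ofReal hf.2.2 hφnn).symm
  calc (∫⁻ x in Ioi (0:ℝ), ENNReal.ofReal (w x * ((f (x+τ) - f x)/τ)^2))
      ≤ ∫⁻ x, (ENNReal.ofReal (1/τ) * ∫⁻ t, K (x, t) ∂μ0) ∂μ0 := hstep1
    _ = ENNReal.ofReal (1/τ) * ∫⁻ x, (∫⁻ t, K (x, t) ∂μ0) ∂μ0 :=
        lintegral_const_mul' _ _ ENNReal.ofReal_ne_top
    _ = ENNReal.ofReal (1/τ) * ∫⁻ t, (∫⁻ x, K (x, t) ∂μ0) ∂μ0 := by rw [hswap]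
    _ ≤ ENNReal.ofReal (1/τ) * ∫⁻ t, (ENNReal.ofReal (w t * f' t ^ 2) * ENNReal.ofReal τ) ∂μ0 :=
        mul_le_mul_right (lintegral_mono hinner) _
    _ = ENNReal.ofReal (1/τ) * ((∫⁻ t, ENNReal.ofReal (w t * f' t ^ 2) ∂μ0) * ENNReal.ofReal τ) := by
        rw [lintegral_mul_const' _ _ ENNReal.ofReal_ne_top]
    _ = (ENNReal.ofReal (1/τ) * ENNReal.ofReal τ) * (∫⁻ t, ENNReal.ofReal (w t * f' t ^ 2) ∂μ0) := by
        ring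
    _ = ∫⁻ t, ENNReal.ofReal (w t * f' t ^ 2) ∂μ0 := by
        rw [← ENNReal.ofReal_mul (by positivity), one_div_mul_cancel hτ', ENNReal.ofReal_one,
          one_mul]
    _ = ENNReal.ofReal (∫ t in Ioi (0:ℝ), w t * f' t ^ 2) := hfin

private lemma L8 (hw : IsWeight w) (hf : MemHw w f f') (hτ : 0 < τ) :
    IntegrableOn (fun x => w x * ((f (x+τ) - f x)/τ)^2) (Ioi (0:ℝ)) volume := by
  have hGc : ContinuousOn (fun x => (f (x+τ) - f x)/τ) (Ici (0:ℝ)) := by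
    refine ContinuousOn.div_const (ContinuousOn.sub ?_ (L2 hf)) τ
    refine (L2 hf).comp (Continuous.continuousOn (by continuity)) fun t ht => ?_
    simp only [mem_Ici] at *
    linarith
  have hGm : AEStronglyMeasurable (fun x => (f (x+τ) - f x)/τ) (volume.restrict (Ioi (0:ℝ))) :=
    (hGc.mono Ioi_subset_Ici_self).aestronglyMeasurable measurableSet_Ioi
  have hwm : AEStronglyMeasurable w (volume.restrict (Ioi (0:ℝ))) :=
    (hw.cont.mono Ioi_subset_Ici_self).aestronglyMeasurable measurableSet_Ioi
  have hm : AEStronglyMeasurable (fun x => w x * ((f (x+τ) - f x)/τ)^2)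
      (volume.restrict (Ioi (0:ℝ))) := by
    have := hwm.mul (hGm.mul hGm)
    refine this.congr (Filter.Eventually.of_forall fun x => ?_)
    simp only [Pi.mul_apply]
    ring
  have hGnn : 0 ≤ᵐ[volume.restrict (Ioi (0:ℝ))] fun x => w x * ((f (x+τ) - f x)/τ)^2 :=
    (ae_restrict_iff' measurableSet_Ioi).2 (Filter.Eventually.of_forall fun t ht =>
      mul_nonneg (by linarith [hw.one_le t (mem_Ici.mpr (le_of_lt (mem_Ioi.mp ht)))]) (sq_nonneg _))
  refine ⟨hm, ?_⟩
  rw [hasFiniteIntegral_iff_ofReal hGnn]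
  exact lt_of_le_of_lt (L7 hw hf hτ) ENNReal.ofReal_lt_top

private lemma L9 (hw : IsWeight w) (hf : MemHw w f f') (hτ : 0 < τ) :
    (∫ x in Ioi (0:ℝ), w x * ((f (x+τ) - f x)/τ)^2) ≤ ∫ t in Ioi (0:ℝ), w t * f' t^2 := by
  have hGnn : 0 ≤ᵐ[volume.restrict (Ioi (0:ℝ))] fun x => w x * ((f (x+τ) - f x)/τ)^2 :=
    (ae_restrict_iff' measurableSet_Ioi).2 (Filter.Eventually.of_forall fun t ht =>
      mul_nonneg (by linarith [hw.one_le t (mem_Ici.mpr (le_of_lt (mem_Ioi.mp ht)))]) (sq_nonneg _))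
  have hφnn : 0 ≤ᵐ[volume.restrict (Ioi (0:ℝ))] fun t => w t * f' t ^ 2 :=
    (ae_restrict_iff' measurableSet_Ioi).2 (Filter.Eventually.of_forall fun t ht =>
      mul_nonneg (by linarith [hw.one_le t (mem_Ici.mpr (le_of_lt (mem_Ioi.mp ht)))]) (sq_nonneg _))
  have hfin : (∫⁻ t in Ioi (0:ℝ), ENNReal.ofReal (w t * f' t ^ 2)) =
      ENNReal.ofReal (∫ t in Ioi (0:ℝ), w t * f' t ^ 2) :=
    (ofReal_integral_eq_lintegral_ofReal hf.2.2 hφnn).symm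
  rw [integral_eq_lintegral_of_nonneg_ae hGnn (L8 hw hf hτ).aestronglyMeasurable,
    integral_eq_lintegral_of_nonneg_ae hφnn hf.2.2.aestronglyMeasurable]
  refine ENNReal.toReal_mono ?_ ?_
  · rw [hfin]; exact ENNReal.ofReal_ne_top
  · rw [hfin]; exact L7 hw hf hτ

end Aux

/-- the integral operator `T^τ` with kernel `q^τ` is everywhere
defined on `H_w`, with `(T^τ f)'(x) = (f(x+τ)−f(x))/τ − f'(x)`,
`∫₀^∞ w ((T^τf)' + f')² ≤ ∫₀^∞ w (f')²`, and
`‖T^τ f‖_w ≤ ‖T^τ f + f‖_w + ‖f‖_w`. -/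
theorem stmt13 (w : ℝ → ℝ) (hw : IsWeight w) (τ : ℝ) (hτ : 0 < τ) :
    ∀ f f' : ℝ → ℝ, MemHw w f f' →
      MemHw w (fun x => ∫ y in Ioi (0:ℝ), qtau τ x y * f' y)
        (fun x => (f (x + τ) - f x) / τ - f' x) ∧
      (∫ x in Ioi (0:ℝ), w x * (((f (x + τ) - f x) / τ - f' x) + f' x) ^ 2) ≤
        (∫ y in Ioi (0:ℝ), w y * f' y ^ 2) ∧
      wNorm w (fun x => ∫ y in Ioi (0:ℝ), qtau τ x y * f' y)
          (fun x => (f (x + τ) - f x) / τ - f' x) ≤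
        wNorm w (fun x => (∫ y in Ioi (0:ℝ), qtau τ x y * f' y) + f x)
            (fun x => (f (x + τ) - f x) / τ) + wNorm w f f' := by
  intro f f' hf
  have hτ' : τ ≠ 0 := ne_of_gt hτ
  -- basic measurability / continuity facts
  have hGc : ContinuousOn (fun x => (f (x+τ) - f x)/τ) (Ici (0:ℝ)) := by
    refine ContinuousOn.div_const (ContinuousOn.sub ?_ (L2 hf)) τ
    refine (L2 hf).comp (Continuous.continuousOn (by continuity)) fun t ht => ?_
    simp only [mem_Ici] at *
    linarith
  have hGm : AEStronglyMeasurable (fun x => (f (x+τ) - f x)/τ) (volume.restrict (Ioi (0:ℝ))) :=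
    (hGc.mono Ioi_subset_Ici_self).aestronglyMeasurable measurableSet_Ioi
  have hwm : AEStronglyMeasurable w (volume.restrict (Ioi (0:ℝ))) :=
    (hw.cont.mono Ioi_subset_Ici_self).aestronglyMeasurable measurableSet_Ioi
  have hf'm : AEStronglyMeasurable f' (volume.restrict (Ioi (0:ℝ))) := L1 hf
  have hsqwc : ContinuousOn (fun x => Real.sqrt (w x)) (Ici (0:ℝ)) :=
    Real.continuous_sqrt.comp_continuousOn hw.cont
  have hsqwm : AEStronglyMeasurable (fun x => Real.sqrt (w x)) (volume.restrict (Ioi (0:ℝ))) :=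
    (hsqwc.mono Ioi_subset_Ici_self).aestronglyMeasurable measurableSet_Ioi
  have hwpos : ∀ x : ℝ, x ∈ Ioi (0:ℝ) → (1:ℝ) ≤ w x := fun x hx => hw.one_le x (mem_Ici.mpr (le_of_lt (mem_Ioi.mp hx)))
  have hGIoc : ∀ x : ℝ, 0 ≤ x → IntegrableOn (fun t => (f (t+τ) - f t)/τ) (Ioc 0 x) := by
    intro x hx
    exact (hGc.mono Icc_subset_Ici_self).integrableOn_Icc.mono_set Ioc_subset_Icc_self
  -- integrability of the three quadratic integrands
  have hP_int : IntegrableOn (fun x => w x * ((f (x+τ) - f x)/τ)^2) (Ioi (0:ℝ)) :=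
    L8 hw hf hτ
  have hQ_int : IntegrableOn (fun x => w x * f' x ^ 2) (Ioi (0:ℝ)) := hf.2.2
  have hR_int : IntegrableOn (fun x => w x * ((f (x+τ) - f x)/τ) * f' x) (Ioi (0:ℝ)) := by
    have hm : AEStronglyMeasurable (fun x => w x * ((f (x+τ) - f x)/τ) * f' x)
        (volume.restrict (Ioi (0:ℝ))) := (hwm.mul hGm).mul hf'm
    refine Integrable.mono' ((hP_int.add hQ_int)) hm
      ((ae_restrict_iff' measurableSet_Ioi).2 (Filter.Eventually.of_forall fun x hx => ?_))
    have hw1 : (1:ℝ) ≤ w x := hwpos x hx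
    set G := (f (x+τ) - f x)/τ
    have : ‖w x * G * f' x‖ = w x * |G| * |f' x| := by
      rw [norm_mul, norm_mul, Real.norm_eq_abs, Real.norm_eq_abs, Real.norm_eq_abs,
        abs_of_nonneg (by linarith : (0:ℝ) ≤ w x)]
    rw [this]
    simp only [Pi.add_apply]
    have h1 : |G| ^ 2 = G ^ 2 := sq_abs G
    have h2 : |f' x| ^ 2 = f' x ^ 2 := sq_abs (f' x)
    nlinarith [mul_nonneg (show (0:ℝ) ≤ w x by linarith) (sq_nonneg (|G| - |f' x|)),
      abs_nonneg G, abs_nonneg (f' x),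
      mul_nonneg (abs_nonneg G) (abs_nonneg (f' x))]
  have hTf'_sq_int : IntegrableOn (fun x => w x * ((f (x+τ) - f x)/τ - f' x)^2) (Ioi (0:ℝ)) := by
    have hm : AEStronglyMeasurable (fun x => w x * ((f (x+τ) - f x)/τ - f' x)^2)
        (volume.restrict (Ioi (0:ℝ))) := by
      have := hwm.mul ((hGm.sub hf'm).mul (hGm.sub hf'm))
      refine this.congr (Filter.Eventually.of_forall fun x => ?_)
      simp only [Pi.mul_apply, Pi.sub_apply]
      ring
    refine Integrable.mono' ((hP_int.const_mul 2).add (hQ_int.const_mul 2)) hm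
      ((ae_restrict_iff' measurableSet_Ioi).2 (Filter.Eventually.of_forall fun x hx => ?_))
    have hw1 : (1:ℝ) ≤ w x := hwpos x hx
    set G := (f (x+τ) - f x)/τ
    have hnn : (0:ℝ) ≤ w x * (G - f' x)^2 := mul_nonneg (by linarith) (sq_nonneg _)
    rw [Real.norm_eq_abs, abs_of_nonneg hnn]
    simp only [Pi.add_apply]
    nlinarith [mul_nonneg (show (0:ℝ) ≤ w x by linarith) (sq_nonneg (G + f' x))]
  -- the three parts
  refine ⟨⟨?_, ?_, ?_⟩, ?_, ?_⟩
  · -- FTC representation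
    intro x hx
    have hx0 : (0:ℝ) ≤ x := hx
    simp only []
    rw [L5 hf hτ x hx0, L5 hf hτ 0 le_rfl, zero_add]
    have hIIf : ∀ a b : ℝ, 0 ≤ a → a ≤ b → IntervalIntegrable f volume a b :=
      fun a b ha hab => (intervalIntegrable_iff_integrableOn_Ioc_of_le hab).2 (L3 hf a b ha)
    have hint_sub : (∫ t in Ioc (0:ℝ) x, ((f (t + τ) - f t) / τ - f' t))
        = (∫ t in Ioc (0:ℝ) x, (f (t + τ) - f t) / τ) - ∫ t in Ioc (0:ℝ) x, f' t :=
      integral_sub (hGIoc x hx0) (hf.2.1 x hx)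
    have hf'x : (∫ t in Ioc (0:ℝ) x, f' t) = f x - f 0 := L4 hf 0 x le_rfl hx0
    have hfplus_int : IntegrableOn (fun t => f (t + τ)) (Ioc 0 x) := by
      have hc : ContinuousOn (fun t => f (t + τ)) (Icc 0 x) := by
        refine (L2 hf).comp (Continuous.continuousOn (by continuity)) fun t ht => ?_
        simp only [mem_Icc] at ht
        simp only [mem_Ici]
        linarith
      exact hc.integrableOn_Icc.mono_set Ioc_subset_Icc_self
    have hf_int : IntegrableOn f (Ioc 0 x) := L3 hf 0 x le_rfl
    have hGsplit : (∫ t in Ioc (0:ℝ) x, (f (t + τ) - f t) / τ)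
        = ((∫ t in Ioc (0:ℝ) x, f (t + τ)) - ∫ t in Ioc (0:ℝ) x, f t) / τ := by
      rw [integral_div, integral_sub hfplus_int hf_int]
    have htrans : (∫ t in Ioc (0:ℝ) x, f (t + τ)) = ∫ z in Ioc τ (x + τ), f z := by
      rw [← intervalIntegral.integral_of_le hx0, intervalIntegral.integral_comp_add_right,
        zero_add, intervalIntegral.integral_of_le (by linarith : τ ≤ x + τ)]
    have heq : (∫ z in Ioc x (x+τ), f z)
        = (∫ z in Ioc (0:ℝ) (0+τ), f z) + (∫ z in Ioc τ (x+τ), f z) - ∫ z in Ioc (0:ℝ) x, f z := by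
      have e1 : (∫ z in (0:ℝ)..x, f z) + (∫ z in x..(x+τ), f z) = ∫ z in (0:ℝ)..(x+τ), f z :=
        intervalIntegral.integral_add_adjacent_intervals (hIIf 0 x le_rfl hx0)
          (hIIf x (x+τ) hx0 (by linarith))
      have e2 : (∫ z in (0:ℝ)..τ, f z) + (∫ z in τ..(x+τ), f z) = ∫ z in (0:ℝ)..(x+τ), f z :=
        intervalIntegral.integral_add_adjacent_intervals (hIIf 0 τ le_rfl hτ.le)
          (hIIf τ (x+τ) hτ.le (by linarith))
      rw [zero_add, ← intervalIntegral.integral_of_le (show x ≤ x + τ by linarith),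
        ← intervalIntegral.integral_of_le hτ.le,
        ← intervalIntegral.integral_of_le (show τ ≤ x + τ by linarith),
        ← intervalIntegral.integral_of_le hx0]
      linarith [e1, e2]
    rw [hint_sub, hf'x, hGsplit, htrans, heq]
    ring
  · -- local integrability of the derivative
    intro x hx
    exact (hGIoc x hx).sub (hf.2.1 x hx)
  · -- square integrability
    exact hTf'_sq_int
  · -- the contraction inequality
    have h2 : (∫ x in Ioi (0:ℝ), w x * (((f (x + τ) - f x) / τ - f' x) + f' x) ^ 2)
        = ∫ x in Ioi (0:ℝ), w x * ((f (x+τ) - f x)/τ)^2 :=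
      integral_congr_ae (Filter.Eventually.of_forall fun x => by ring)
    rw [h2]
    exact L9 hw hf hτ
  · -- the triangle inequality
    set Tf0 : ℝ := ∫ y in Ioi (0:ℝ), qtau τ 0 y * f' y with hTf0
    set P : ℝ := ∫ x in Ioi (0:ℝ), w x * ((f (x+τ) - f x)/τ)^2 with hP
    set Q : ℝ := ∫ x in Ioi (0:ℝ), w x * f' x ^ 2 with hQ
    set R : ℝ := ∫ x in Ioi (0:ℝ), w x * ((f (x+τ) - f x)/τ) * f' x with hR
    have hP0 : 0 ≤ P := setIntegral_nonneg measurableSet_Ioi fun x hx =>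
      mul_nonneg (by linarith [hwpos x hx]) (sq_nonneg _)
    have hQ0 : 0 ≤ Q := setIntegral_nonneg measurableSet_Ioi fun x hx =>
      mul_nonneg (by linarith [hwpos x hx]) (sq_nonneg _)
    -- Cauchy-Schwarz for R
    have hRcs : |R| ≤ Real.sqrt P * Real.sqrt Q := by
      set u : ℝ → ℝ := fun x => Real.sqrt (w x) * ((f (x+τ) - f x)/τ) with hu
      set v : ℝ → ℝ := fun x => Real.sqrt (w x) * f' x with hv
      have hae : ∀ᵐ x ∂(volume.restrict (Ioi (0:ℝ))), x ∈ Ioi (0:ℝ) :=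
        ae_restrict_mem measurableSet_Ioi
      have hu2 : (fun x => u x ^ 2) =ᵐ[volume.restrict (Ioi (0:ℝ))]
          fun x => w x * ((f (x+τ) - f x)/τ)^2 := by
        filter_upwards [hae] with x hx
        rw [hu]
        simp only [mul_pow, Real.sq_sqrt (by linarith [hwpos x hx] : (0:ℝ) ≤ w x)]
      have hv2 : (fun x => v x ^ 2) =ᵐ[volume.restrict (Ioi (0:ℝ))]
          fun x => w x * f' x ^ 2 := by
        filter_upwards [hae] with x hx
        rw [hv]
        simp only [mul_pow, Real.sq_sqrt (by linarith [hwpos x hx] : (0:ℝ) ≤ w x)]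
      have huv : (fun x => u x * v x) =ᵐ[volume.restrict (Ioi (0:ℝ))]
          fun x => w x * ((f (x+τ) - f x)/τ) * f' x := by
        filter_upwards [hae] with x hx
        rw [hu, hv]
        have hww : Real.sqrt (w x) * Real.sqrt (w x) = w x :=
          Real.mul_self_sqrt (by linarith [hwpos x hx])
        calc Real.sqrt (w x) * ((f (x+τ) - f x)/τ) * (Real.sqrt (w x) * f' x)
            = (Real.sqrt (w x) * Real.sqrt (w x)) * (((f (x+τ) - f x)/τ) * f' x) := by ring
          _ = w x * ((f (x+τ) - f x)/τ) * f' x := by rw [hww]; ring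
      have hmu : MemLp u 2 (volume.restrict (Ioi (0:ℝ))) :=
        (memLp_two_iff_integrable_sq (hsqwm.mul hGm)).2 (hP_int.congr hu2.symm)
      have hmv : MemLp v 2 (volume.restrict (Ioi (0:ℝ))) :=
        (memLp_two_iff_integrable_sq (hsqwm.mul hf'm)).2 (hQ_int.congr hv2.symm)
      have hcs := cs2 hmu hmv
      rw [integral_congr_ae huv, integral_congr_ae hu2, integral_congr_ae hv2] at hcs
      have : |R| = Real.sqrt (R ^ 2) := (Real.sqrt_sq_eq_abs R).symm
      rw [this, ← Real.sqrt_mul hP0]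
      exact Real.sqrt_le_sqrt hcs
    -- identify the three inner products
    have hTfInner : (∫ x in Ioi (0:ℝ), w x * ((f (x+τ) - f x)/τ - f' x) * ((f (x+τ) - f x)/τ - f' x))
        = P - 2 * R + Q := by
      have hpt : (fun x => w x * ((f (x+τ) - f x)/τ - f' x) * ((f (x+τ) - f x)/τ - f' x))
          =ᵐ[volume.restrict (Ioi (0:ℝ))]
          fun x => (w x * ((f (x+τ) - f x)/τ)^2 - 2 * (w x * ((f (x+τ) - f x)/τ) * f' x))
            + w x * f' x ^ 2 :=
        Filter.Eventually.of_forall fun x => by ring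
      have hsub : Integrable (fun x => w x * ((f (x+τ) - f x)/τ)^2
          - 2 * (w x * ((f (x+τ) - f x)/τ) * f' x)) (volume.restrict (Ioi (0:ℝ))) :=
        hP_int.sub (hR_int.const_mul 2)
      rw [integral_congr_ae hpt, integral_add hsub hQ_int,
        integral_sub hP_int (hR_int.const_mul 2), integral_const_mul]
    have hhInner : (∫ x in Ioi (0:ℝ), w x * ((f (x+τ) - f x)/τ) * ((f (x+τ) - f x)/τ)) = P := by
      rw [hP]
      exact integral_congr_ae (Filter.Eventually.of_forall fun x => by ring)
    have hfInner : (∫ x in Ioi (0:ℝ), w x * f' x * f' x) = Q := by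
      rw [hQ]
      exact integral_congr_ae (Filter.Eventually.of_forall fun x => by ring)
    have htri := tri (Tf0 + f 0) (f 0) P Q R hP0 hQ0 hRcs
    rw [add_sub_cancel_right] at htri
    simp only [wNorm, wInner]
    rw [hTfInner, hhInner, hfInner] at *
    convert htri using 3 <;> ring
end
end

section
/- Let X be a mean-zero square-integrable H_w-valued random variable with covariance operator Q. Define ρ(x,y) = E[X(x)X(y)]/√(E[X(x)²]E[X(y)²]) (set to 1 when the denominator vanishes), where X(x) = δ_x(X). Then for every x ≥ 0 there exists ε > 0 such that for all y with |x−y| ≤ ε: ρ(x,y) ≥ 1 − 2‖Q‖_op^{1/2}√|x−y| / (‖Q^{1/2} h_x‖_w + ‖Q‖_op^{1/2}√|x−y|). -/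
open Set

/-- correlation lower bound.  Abstract version over any real
inner product space `H` (playing the role of `H_w`): `Q` is the covariance
operator of a mean-zero square-integrable `H_w`-valued random variable `X`,
`C = Q^{1/2}` its positive symmetric square root, `h x = h_x` the reproducing
kernels (so `X(x) = ⟨h_x, X⟩`, `E[X(x)X(y)] = ⟨Q h_x, h_y⟩`,
`E[X(x)²] = ‖C h_x‖²`), satisfying the Hölder bound `‖h_y − h_x‖ ≤ √|y−x|`.
Then for every `x ≥ 0` there is `ε > 0` such that for all `y ≥ 0` with
`|x−y| ≤ ε`:
`ρ(x,y) ≥ 1 − 2‖Q‖^{1/2}√|x−y| / (‖Q^{1/2}h_x‖ + ‖Q‖^{1/2}√|x−y|)`. -/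
theorem stmt15 {H : Type*} [NormedAddCommGroup H] [InnerProductSpace ℝ H]
    (Q C : H →L[ℝ] H)
    (hQC : ∀ g : H, Q g = C (C g))
    (hCsym : ∀ g h : H, (inner ℝ (C g) h : ℝ) = inner ℝ g (C h))
    (h : ℝ → H)
    (hHolder : ∀ x y : ℝ, 0 ≤ x → 0 ≤ y → ‖h y - h x‖ ≤ Real.sqrt |y - x|)
    (ρ : ℝ → ℝ → ℝ)
    (hρ : ∀ x y : ℝ, ρ x y =
      if ‖C (h x)‖ * ‖C (h y)‖ = 0 then 1
      else (inner ℝ (Q (h x)) (h y) : ℝ) / (‖C (h x)‖ * ‖C (h y)‖)) :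
    ∀ x : ℝ, 0 ≤ x → ∃ ε > (0:ℝ), ∀ y : ℝ, 0 ≤ y → |x - y| ≤ ε →
      1 - 2 * Real.sqrt ‖Q‖ * Real.sqrt |x - y| /
          (‖C (h x)‖ + Real.sqrt ‖Q‖ * Real.sqrt |x - y|) ≤ ρ x y := by
  intro x hx
  have hCbound : ∀ g : H, ‖C g‖ ≤ Real.sqrt ‖Q‖ * ‖g‖ := by
    intro g
    have h1 : ‖C g‖ ^ 2 ≤ ‖Q‖ * ‖g‖ ^ 2 := by
      have h2 : (‖C g‖ : ℝ) ^ 2 = inner ℝ (C g) (C g) := (real_inner_self_eq_norm_sq _).symm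
      rw [h2, hCsym, ← hQC]
      calc (inner ℝ g (Q g) : ℝ) ≤ ‖g‖ * ‖Q g‖ := real_inner_le_norm _ _
        _ ≤ ‖g‖ * (‖Q‖ * ‖g‖) := by
            have := Q.le_opNorm g
            have hg : (0:ℝ) ≤ ‖g‖ := norm_nonneg _
            nlinarith
        _ = ‖Q‖ * ‖g‖ ^ 2 := by ring
    calc ‖C g‖ = Real.sqrt (‖C g‖ ^ 2) := (Real.sqrt_sq (norm_nonneg _)).symm
      _ ≤ Real.sqrt (‖Q‖ * ‖g‖ ^ 2) := Real.sqrt_le_sqrt h1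
      _ = Real.sqrt ‖Q‖ * ‖g‖ := by
          rw [Real.sqrt_mul (norm_nonneg _), Real.sqrt_sq (norm_nonneg _)]
  set a := ‖C (h x)‖ with ha
  by_cases haz : a = 0
  · refine ⟨1, one_pos, fun y hy hxy => ?_⟩
    have : ρ x y = 1 := by rw [hρ]; simp [← ha, haz]
    rw [this, haz]
    have hd : (0:ℝ) ≤ Real.sqrt ‖Q‖ * Real.sqrt |x - y| :=
      mul_nonneg (Real.sqrt_nonneg _) (Real.sqrt_nonneg _)
    have : (0:ℝ) ≤ 2 * Real.sqrt ‖Q‖ * Real.sqrt |x - y| /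
        (0 + Real.sqrt ‖Q‖ * Real.sqrt |x - y|) := by
      apply div_nonneg (by linarith) (by linarith)
    linarith
  · have hapos : 0 < a := lt_of_le_of_ne (norm_nonneg _) (Ne.symm haz)
    refine ⟨a ^ 2 / (‖Q‖ + 1), by positivity, fun y hy hxy => ?_⟩
    set d := Real.sqrt ‖Q‖ * Real.sqrt |x - y| with hd
    have hdnn : 0 ≤ d := mul_nonneg (Real.sqrt_nonneg _) (Real.sqrt_nonneg _)
    -- d ≤ a
    have hda : d ≤ a := by
      have h1 : d = Real.sqrt (‖Q‖ * |x - y|) := by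
        rw [hd, Real.sqrt_mul (norm_nonneg _)]
      have h2 : ‖Q‖ * |x - y| ≤ a ^ 2 := by
        have hQ1 : (0:ℝ) < ‖Q‖ + 1 := by positivity
        have := mul_le_mul_of_nonneg_left hxy (norm_nonneg Q)
        have h3 : ‖Q‖ * (a ^ 2 / (‖Q‖ + 1)) ≤ a ^ 2 := by
          have h4 : ‖Q‖ / (‖Q‖ + 1) ≤ 1 := (div_le_one hQ1).mpr (by linarith)
          calc ‖Q‖ * (a ^ 2 / (‖Q‖ + 1)) = a ^ 2 * (‖Q‖ / (‖Q‖ + 1)) := by ring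
            _ ≤ a ^ 2 * 1 := by
                have := sq_nonneg a
                nlinarith
            _ = a ^ 2 := mul_one _
        linarith
      rw [h1]
      calc Real.sqrt (‖Q‖ * |x - y|) ≤ Real.sqrt (a ^ 2) := Real.sqrt_le_sqrt h2
        _ = a := Real.sqrt_sq hapos.le
    set b := ‖C (h y)‖ with hb
    have hbnn : 0 ≤ b := norm_nonneg _
    -- ‖C (h y) - C (h x)‖ ≤ d
    have hdiff : ‖C (h y) - C (h x)‖ ≤ d := by
      calc ‖C (h y) - C (h x)‖ = ‖C (h y - h x)‖ := by rw [map_sub]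
        _ ≤ Real.sqrt ‖Q‖ * ‖h y - h x‖ := hCbound _
        _ ≤ Real.sqrt ‖Q‖ * Real.sqrt |y - x| := by
            exact mul_le_mul_of_nonneg_left (hHolder x y hx hy) (Real.sqrt_nonneg _)
        _ = d := by rw [hd, abs_sub_comm]
    have hble : b ≤ a + d := by
      calc b = ‖C (h x) + (C (h y) - C (h x))‖ := by rw [hb]; congr 1; abel
        _ ≤ a + ‖C (h y) - C (h x)‖ := norm_add_le _ _
        _ ≤ a + d := by linarith
    by_cases hbz : b = 0
    · have : ρ x y = 1 := by rw [hρ]; simp [← ha, ← hb, hbz]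
      rw [this]
      have : (0:ℝ) ≤ 2 * Real.sqrt ‖Q‖ * Real.sqrt |x - y| / (a + d) := by
        apply div_nonneg (by positivity) (by linarith)
      rw [hd] at this
      linarith
    · have hbpos : 0 < b := lt_of_le_of_ne hbnn (Ne.symm hbz)
      have hI : a ^ 2 - a * d ≤ (inner ℝ (Q (h x)) (h y) : ℝ) := by
        have hI1 : (inner ℝ (Q (h x)) (h y) : ℝ) = inner ℝ (C (h x)) (C (h y)) := by
          rw [hQC, hCsym]
        have hI2 : (inner ℝ (C (h x)) (C (h y)) : ℝ) =
            inner ℝ (C (h x)) (C (h x)) + inner ℝ (C (h x)) (C (h y) - C (h x)) := by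
          rw [inner_sub_right]; ring
        have hI3 : (inner ℝ (C (h x)) (C (h x)) : ℝ) = a ^ 2 := real_inner_self_eq_norm_sq _
        have hI4 : |(inner ℝ (C (h x)) (C (h y) - C (h x)) : ℝ)| ≤ a * d := by
          calc |(inner ℝ (C (h x)) (C (h y) - C (h x)) : ℝ)| ≤ a * ‖C (h y) - C (h x)‖ :=
            abs_real_inner_le_norm _ _
            _ ≤ a * d := by gcongr
        have := abs_le.mp hI4
        rw [hI1, hI2, hI3]; linarith
      have hρeq : ρ x y = (inner ℝ (Q (h x)) (h y) : ℝ) / (a * b) := by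
        rw [hρ]
        rw [if_neg (by positivity)]
      have hadpos : 0 < a + d := by linarith
      have key : 1 - 2 * d / (a + d) ≤ (inner ℝ (Q (h x)) (h y) : ℝ) / (a * b) := by
        have e1 : 1 - 2 * d / (a + d) = (a - d) / (a + d) := by
          field_simp; ring
        have e2 : (a - d) / (a + d) ≤ (a - d) / b :=
          div_le_div_of_nonneg_left (by linarith) hbpos hble
        have e3 : (a - d) / b ≤ (inner ℝ (Q (h x)) (h y) : ℝ) / (a * b) := by
          rw [div_le_div_iff₀ hbpos (by positivity)]
          nlinarith
        linarith
      rw [hρeq]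
      have e0 : 2 * Real.sqrt ‖Q‖ * Real.sqrt |x - y| = 2 * d := by rw [hd]; ring
      rw [e0]
      exact key
end

section
/- Let λ, T > 0 and define cut : ℝ → [0,T), x ↦ x − T·⌊x/T⌋, and A : L²([0,T),ℂ) → L²(ℝ≥0,ℂ), Af(x) = e^{−λx} f(cut(x)). Then A is a bounded linear operator with closed range, and for every f ∈ L²([0,T),ℂ): (e^{−2Tλ}/(1−e^{−2Tλ})) ‖f‖² ≤ ‖Af‖² ≤ (1/(1−e^{−2Tλ})) ‖f‖². -/
open MeasureTheory Set

open scoped ENNReal NNReal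

noncomputable section
namespace Stmt17

open Filter

def cutf (T x : ℝ) : ℝ := x - T * (⌊x / T⌋ : ℤ)

lemma cutf_measurable (T : ℝ) : Measurable (cutf T) := by
  unfold cutf
  have h1 : Measurable fun x : ℝ => (⌊x / T⌋ : ℤ) :=
    Int.measurable_floor.comp (measurable_id.div_const T)
  exact measurable_id.sub (measurable_const.mul (measurable_from_top.comp h1))

lemma cutf_eq {T : ℝ} (hT : 0 < T) (n : ℕ) {x : ℝ}
    (hx : x ∈ Ico ((n:ℝ)*T) ((n+1)*T)) : cutf T x = x - n*T := by
  obtain ⟨h1, h2⟩ := hx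
  have hfloor : ⌊x / T⌋ = (n : ℤ) := by
    rw [Int.floor_eq_iff]
    constructor
    · rw [le_div_iff₀ hT]; exact_mod_cast h1
    · rw [div_lt_iff₀ hT]; push_cast; exact_mod_cast h2
  unfold cutf; rw [hfloor]; push_cast; ring

lemma union_eq {T : ℝ} (hT : 0 < T) :
    (⋃ n : ℕ, Ico ((n:ℝ)*T) ((n+1)*T)) = Ici 0 := by
  ext x
  simp only [mem_iUnion, mem_Ico, mem_Ici]
  constructor
  · rintro ⟨n, h1, _⟩; exact le_trans (by positivity) h1
  · intro hx
    have h0 : (0:ℤ) ≤ ⌊x/T⌋ := Int.floor_nonneg.2 (div_nonneg hx hT.le)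
    refine ⟨⌊x/T⌋.toNat, ?_, ?_⟩
    · have hfl := Int.floor_le (x/T)
      have : ((⌊x/T⌋.toNat : ℕ) : ℝ) = ((⌊x/T⌋ : ℤ) : ℝ) := by
        exact_mod_cast Int.toNat_of_nonneg h0
      rw [this]
      calc ((⌊x/T⌋ : ℤ) : ℝ) * T ≤ (x/T) * T := mul_le_mul_of_nonneg_right hfl hT.le
        _ = x := div_mul_cancel₀ x hT.ne'
    · have hlt := Int.lt_floor_add_one (x/T)
      have hc : ((⌊x/T⌋.toNat : ℕ) : ℝ) = ((⌊x/T⌋ : ℤ) : ℝ) := by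
        exact_mod_cast Int.toNat_of_nonneg h0
      rw [hc]
      calc x = (x/T) * T := (div_mul_cancel₀ x hT.ne').symm
        _ < (((⌊x/T⌋ : ℤ) : ℝ) + 1) * T := by
            apply mul_lt_mul_of_pos_right _ hT
            exact_mod_cast hlt

lemma disj {T : ℝ} (hT : 0 < T) :
    Pairwise (Function.onFun Disjoint fun n : ℕ => Ico ((n:ℝ)*T) ((n+1)*T)) := by
  intro m n hmn
  rcases hmn.lt_or_gt with h | h
  · simp only [Function.onFun]
    rw [Set.disjoint_left]
    rintro x ⟨_, h2⟩ ⟨h3, _⟩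
    have : ((m:ℝ)+1) ≤ (n:ℝ) := by exact_mod_cast h
    nlinarith
  · simp only [Function.onFun]
    rw [Set.disjoint_left]
    rintro x ⟨h1, _⟩ ⟨_, h4⟩
    have : ((n:ℝ)+1) ≤ (m:ℝ) := by exact_mod_cast h
    nlinarith

lemma exp_nnnorm_sq (lam x : ℝ) (z : ℂ) :
    ((‖Complex.exp (-(lam:ℂ)*x) * z‖₊ : ℝ≥0∞))^2
      = ENNReal.ofReal (Real.exp (-(2*lam*x))) * ((‖z‖₊ : ℝ≥0∞))^2 := by
  rw [nnnorm_mul, ENNReal.coe_mul, mul_pow]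
  congr 1
  have h1 : ‖Complex.exp (-(lam:ℂ)*x)‖ = Real.exp (-(lam*x)) := by
    rw [Complex.norm_exp]
    congr 1
    simp
  rw [← ENNReal.ofReal_coe_nnreal, coe_nnnorm, h1, ← ENNReal.ofReal_pow (Real.exp_nonneg _)]
  congr 1
  rw [← Real.exp_nat_mul]
  congr 1
  push_cast
  ring

lemma geom_sum_aux (ρ : ℝ≥0∞) (C : ℝ≥0∞) :
    ∑' n : ℕ, ρ^n * C = (1 - ρ)⁻¹ * C := by
  rw [ENNReal.tsum_mul_right, ENNReal.tsum_geometric]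

lemma key {lam T : ℝ} (hT : 0 < T) (f : ℝ → ℂ) :
    ∫⁻ x in Ioi (0:ℝ), ENNReal.ofReal (Real.exp (-(2*lam*x))) * ((‖f (cutf T x)‖₊ : ℝ≥0∞))^2
      = (1 - ENNReal.ofReal (Real.exp (-(2*T*lam))))⁻¹ *
        ∫⁻ y in Ioc (0:ℝ) T, ENNReal.ofReal (Real.exp (-(2*lam*y))) * ((‖f y‖₊ : ℝ≥0∞))^2 := by
  set F : ℝ → ℝ≥0∞ := fun x => ENNReal.ofReal (Real.exp (-(2*lam*x))) * ((‖f (cutf T x)‖₊ : ℝ≥0∞))^2 with hF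
  set ρ : ℝ≥0∞ := ENNReal.ofReal (Real.exp (-(2*T*lam))) with hρ
  set C : ℝ≥0∞ := ∫⁻ y in Ioc (0:ℝ) T, ENNReal.ofReal (Real.exp (-(2*lam*y))) * ((‖f y‖₊ : ℝ≥0∞))^2 with hC
  have h1 : volume.restrict (Ioi (0:ℝ)) = volume.restrict (⋃ n:ℕ, Ico ((n:ℝ)*T) ((n+1)*T)) := by
    rw [union_eq hT]; exact Measure.restrict_congr_set Ioi_ae_eq_Ici
  rw [h1, lintegral_iUnion (fun n => measurableSet_Ico) (disj hT)]
  have hterm : ∀ n : ℕ, ∫⁻ x in Ico ((n:ℝ)*T) ((n+1)*T), F x = ρ^n * C := by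
    intro n
    -- translate
    have htrans := (measurePreserving_add_right volume ((n:ℝ)*T)).setLIntegral_comp_emb
      (measurableEmbedding_addRight _) F (Ico (0:ℝ) T)
    have himg : (fun x => x + (n:ℝ)*T) '' Ico (0:ℝ) T = Ico ((n:ℝ)*T) ((n+1)*T) := by
      rw [image_add_const_Ico]
      congr 1 <;> ring
    rw [himg] at htrans
    rw [← htrans]
    -- pointwise rewrite on Ico 0 T
    have hpt : ∫⁻ y in Ico (0:ℝ) T, F (y + (n:ℝ)*T)
        = ∫⁻ y in Ico (0:ℝ) T, ρ^n * (ENNReal.ofReal (Real.exp (-(2*lam*y))) * ((‖f y‖₊ : ℝ≥0∞))^2) := by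
      apply setLIntegral_congr_fun measurableSet_Ico
      intro y hy
      have hcut : cutf T (y + (n:ℝ)*T) = y := by
        have hmem : y + (n:ℝ)*T ∈ Ico ((n:ℝ)*T) ((n+1)*T) := by
          constructor
          · linarith [hy.1]
          · have := hy.2; nlinarith [hy.2]
        rw [cutf_eq hT n hmem]; ring
      rw [hF]
      simp only
      rw [hcut, ← mul_assoc]
      congr 1
      rw [hρ, ← ENNReal.ofReal_pow (Real.exp_nonneg _), ← ENNReal.ofReal_mul (by positivity)]
      congr 1
      rw [← Real.exp_nat_mul, ← Real.exp_add]
      congr 1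
      ring
    rw [hpt, lintegral_const_mul' _ _ (by
      apply ENNReal.pow_ne_top
      exact ENNReal.ofReal_ne_top)]
    congr 1
    rw [hC]
    exact congrFun (congrArg _ (Measure.restrict_congr_set Ico_ae_eq_Ioc)) _
  rw [tsum_congr hterm]
  rw [ENNReal.tsum_mul_right, ENNReal.tsum_geometric]

-- upper bound for the inner integral
lemma inner_le {lam T : ℝ} (hlam : 0 < lam) (f : ℝ → ℂ) :
    ∫⁻ y in Ioc (0:ℝ) T, ENNReal.ofReal (Real.exp (-(2*lam*y))) * ((‖f y‖₊ : ℝ≥0∞))^2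
      ≤ ∫⁻ y in Ioc (0:ℝ) T, ((‖f y‖₊ : ℝ≥0∞))^2 := by
  apply lintegral_mono_ae
  filter_upwards [ae_restrict_mem measurableSet_Ioc] with y hy
  calc ENNReal.ofReal (Real.exp (-(2*lam*y))) * ((‖f y‖₊ : ℝ≥0∞))^2
      ≤ 1 * ((‖f y‖₊ : ℝ≥0∞))^2 := by
        gcongr
        rw [← ENNReal.ofReal_one]
        apply ENNReal.ofReal_le_ofReal
        rw [Real.exp_le_one_iff]
        nlinarith [hy.1]
    _ = ((‖f y‖₊ : ℝ≥0∞))^2 := one_mul _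

-- lower bound for the inner integral
lemma inner_ge {lam T : ℝ} (hlam : 0 < lam) (f : ℝ → ℂ) :
    ENNReal.ofReal (Real.exp (-(2*T*lam))) * ∫⁻ y in Ioc (0:ℝ) T, ((‖f y‖₊ : ℝ≥0∞))^2
      ≤ ∫⁻ y in Ioc (0:ℝ) T, ENNReal.ofReal (Real.exp (-(2*lam*y))) * ((‖f y‖₊ : ℝ≥0∞))^2 := by
  rw [← lintegral_const_mul' _ _ ENNReal.ofReal_ne_top]
  apply lintegral_mono_ae
  filter_upwards [ae_restrict_mem measurableSet_Ioc] with y hy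
  refine mul_le_mul_left (ENNReal.ofReal_le_ofReal (Real.exp_le_exp.2 ?_)) _
  nlinarith [hy.2]

lemma map_cutf_ac {lam T : ℝ} (hlam : 0 < lam) (hT : 0 < T) :
    (volume.restrict (Ioi (0:ℝ))).map (cutf T) ≪ volume.restrict (Ioc (0:ℝ) T) := by
  apply Measure.AbsolutelyContinuous.mk
  intro s hs hs0
  rw [Measure.map_apply (cutf_measurable T) hs]
  -- use key with the indicator of s
  set f : ℝ → ℂ := s.indicator (fun _ => 1) with hf
  have hnorm : ∀ y, ((‖f y‖₊ : ℝ≥0∞))^2 = s.indicator (fun _ => (1:ℝ≥0∞)) y := by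
    intro y
    by_cases hy : y ∈ s <;> simp [hf, hy]
  have hK : ∫⁻ y in Ioc (0:ℝ) T, ENNReal.ofReal (Real.exp (-(2*lam*y))) * ((‖f y‖₊ : ℝ≥0∞))^2 = 0 := by
    have hle := inner_le (T := T) hlam f
    have : ∫⁻ y in Ioc (0:ℝ) T, ((‖f y‖₊ : ℝ≥0∞))^2 = 0 := by
      calc ∫⁻ y in Ioc (0:ℝ) T, ((‖f y‖₊ : ℝ≥0∞))^2
          = ∫⁻ y in Ioc (0:ℝ) T, s.indicator (fun _ => (1:ℝ≥0∞)) y := by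
            exact lintegral_congr hnorm
        _ = (volume.restrict (Ioc (0:ℝ) T)) s := by
            rw [lintegral_indicator hs, setLIntegral_one]
        _ = 0 := hs0
    exact le_antisymm (this ▸ hle) zero_le
  have hJ : ∫⁻ x in Ioi (0:ℝ), ENNReal.ofReal (Real.exp (-(2*lam*x))) * ((‖f (cutf T x)‖₊ : ℝ≥0∞))^2 = 0 := by
    rw [key hT f, hK, mul_zero]
  have hJ' : ∫⁻ x in Ioi (0:ℝ), ENNReal.ofReal (Real.exp (-(2*lam*x))) * (cutf T ⁻¹' s).indicator (fun _ => (1:ℝ≥0∞)) x = 0 := by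
    rw [← hJ]
    apply lintegral_congr
    intro x
    congr 1
    rw [hnorm (cutf T x)]
    by_cases hx : cutf T x ∈ s <;> simp [hx]
  have hmeas : Measurable fun x => ENNReal.ofReal (Real.exp (-(2*lam*x))) * (cutf T ⁻¹' s).indicator (fun _ => (1:ℝ≥0∞)) x := by
    apply Measurable.mul
    · apply ENNReal.measurable_ofReal.comp
      exact (Real.measurable_exp.comp (measurable_const.mul measurable_id).neg)
    · exact measurable_const.indicator ((cutf_measurable T) hs)
  rw [lintegral_eq_zero_iff hmeas] at hJ'
  have : (cutf T ⁻¹' s).indicator (fun _ => (1:ℝ≥0∞)) =ᵐ[volume.restrict (Ioi (0:ℝ))] 0 := by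
    filter_upwards [hJ'] with x hx
    have hexp : ENNReal.ofReal (Real.exp (-(2*lam*x))) ≠ 0 := by
      simp [Real.exp_pos]
    simpa [hexp] using hx
  calc (volume.restrict (Ioi (0:ℝ))) (cutf T ⁻¹' s)
      = ∫⁻ x in Ioi (0:ℝ), (cutf T ⁻¹' s).indicator (fun _ => (1:ℝ≥0∞)) x := by
        rw [lintegral_indicator ((cutf_measurable T) hs), setLIntegral_one]
    _ = 0 := by rw [lintegral_congr_ae this]; simp

lemma comp_aeeq {lam T : ℝ} (hlam : 0 < lam) (hT : 0 < T) {u v : ℝ → ℂ}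
    (h : u =ᵐ[volume.restrict (Ioc (0:ℝ) T)] v) :
    (fun x => u (cutf T x)) =ᵐ[volume.restrict (Ioi (0:ℝ))] (fun x => v (cutf T x)) := by
  have h2 : u =ᵐ[(volume.restrict (Ioi (0:ℝ))).map (cutf T)] v :=
    (map_cutf_ac hlam hT).ae_le h
  exact ae_eq_comp (cutf_measurable T).aemeasurable h2

lemma comp_aesm {lam T : ℝ} (hlam : 0 < lam) (hT : 0 < T) {u : ℝ → ℂ}
    (h : AEStronglyMeasurable u (volume.restrict (Ioc (0:ℝ) T))) :
    AEStronglyMeasurable (fun x => u (cutf T x)) (volume.restrict (Ioi (0:ℝ))) :=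
  (h.mono_ac (map_cutf_ac hlam hT)).comp_aemeasurable (cutf_measurable T).aemeasurable

variable {lam T : ℝ}

lemma eLpNorm_two (u : ℝ → ℂ) (m : Measure ℝ) :
    eLpNorm u 2 m = (∫⁻ x, ((‖u x‖₊ : ℝ≥0∞))^2 ∂m) ^ (1/2 : ℝ) := by
  rw [eLpNorm_eq_lintegral_rpow_enorm_toReal two_ne_zero ENNReal.ofNat_ne_top]
  have h2 : (2:ℝ≥0∞).toReal = (2:ℝ) := by norm_num
  rw [h2]
  congr 1
  apply lintegral_congr
  intro x
  rw [← ENNReal.rpow_natCast]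
  norm_num
  rfl

lemma sq_toReal_rpow_half (a : ℝ≥0∞) : ((a ^ (1/2:ℝ)).toReal)^2 = a.toReal := by
  rw [← ENNReal.toReal_rpow, ← Real.rpow_natCast (a.toReal ^ (1/2:ℝ)) 2,
    ← Real.rpow_mul ENNReal.toReal_nonneg]
  norm_num

lemma rpow_half_ne_top {a : ℝ≥0∞} (h : a ^ (1/2:ℝ) < ⊤) : a ≠ ⊤ := by
  intro ha
  rw [ha, ENNReal.top_rpow_of_pos (by norm_num)] at h
  exact (lt_irrefl _ h)

variable {lam T : ℝ}

/-- the function underlying `A f` -/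
def G (lam T : ℝ) (u : ℝ → ℂ) : ℝ → ℂ :=
  fun x => Complex.exp (-(lam:ℂ)*x) * u (cutf T x)

lemma J_eq (hT : 0 < T) (u : ℝ → ℂ) :
    ∫⁻ x in Ioi (0:ℝ), ((‖G lam T u x‖₊ : ℝ≥0∞))^2
      = (1 - ENNReal.ofReal (Real.exp (-(2*T*lam))))⁻¹ *
        ∫⁻ y in Ioc (0:ℝ) T, ENNReal.ofReal (Real.exp (-(2*lam*y))) * ((‖u y‖₊ : ℝ≥0∞))^2 := by
  rw [← key hT u]
  apply lintegral_congr
  intro x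
  exact exp_nnnorm_sq lam x _

lemma rho_lt_one (hlam : 0 < lam) (hT : 0 < T) :
    ENNReal.ofReal (Real.exp (-(2*T*lam))) < 1 := by
  rw [← ENNReal.ofReal_one]
  rw [ENNReal.ofReal_lt_ofReal_iff one_pos]
  rw [Real.exp_lt_one_iff]
  nlinarith

lemma inv_one_sub_rho_ne_top (hlam : 0 < lam) (hT : 0 < T) :
    (1 - ENNReal.ofReal (Real.exp (-(2*T*lam))))⁻¹ ≠ ⊤ := by
  rw [Ne, ENNReal.inv_eq_top, tsub_eq_zero_iff_le]
  exact fun h => absurd h (not_le.2 (rho_lt_one hlam hT))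

lemma I_ne_top (f : Lp ℂ 2 (volume.restrict (Ioc (0:ℝ) T))) :
    ∫⁻ x, ((‖(f : ℝ → ℂ) x‖₊ : ℝ≥0∞))^2 ∂(volume.restrict (Ioc (0:ℝ) T)) ≠ ⊤ := by
  apply rpow_half_ne_top
  rw [← eLpNorm_two]
  exact Lp.eLpNorm_lt_top f

lemma K_ne_top (hlam : 0 < lam) (f : Lp ℂ 2 (volume.restrict (Ioc (0:ℝ) T))) :
    ∫⁻ y in Ioc (0:ℝ) T, ENNReal.ofReal (Real.exp (-(2*lam*y))) * ((‖(f : ℝ → ℂ) y‖₊ : ℝ≥0∞))^2 ≠ ⊤ :=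
  fun h => I_ne_top f (top_le_iff.1 (h ▸ inner_le hlam _))

lemma memG (hlam : 0 < lam) (hT : 0 < T) (f : Lp ℂ 2 (volume.restrict (Ioc (0:ℝ) T))) :
    MemLp (G lam T (f : ℝ → ℂ)) 2 (volume.restrict (Ioi (0:ℝ))) := by
  constructor
  · apply AEStronglyMeasurable.mul
    · exact (Complex.continuous_exp.comp (continuous_const.mul Complex.continuous_ofReal)).aestronglyMeasurable
    · exact comp_aesm hlam hT (Lp.aestronglyMeasurable f)
  · rw [eLpNorm_two, J_eq hT]
    apply ENNReal.rpow_lt_top_of_nonneg (by norm_num)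
    exact ENNReal.mul_ne_top (inv_one_sub_rho_ne_top hlam hT) (K_ne_top hlam f)

def A0 (hlam : 0 < lam) (hT : 0 < T) :
    Lp ℂ 2 (volume.restrict (Ioc (0:ℝ) T)) →ₗ[ℂ] Lp ℂ 2 (volume.restrict (Ioi (0:ℝ))) where
  toFun f := (memG hlam hT f).toLp _
  map_add' f g := by
    rw [← MemLp.toLp_add (memG hlam hT f) (memG hlam hT g)]
    apply MemLp.toLp_congr
    have h2 := comp_aeeq hlam hT (Lp.coeFn_add f g)
    filter_upwards [h2] with x hx
    simp only [G, Pi.add_apply]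
    rw [hx]
    simp only [Pi.add_apply]
    ring
  map_smul' c f := by
    simp only [RingHom.id_apply]
    rw [← MemLp.toLp_const_smul c (memG hlam hT f)]
    apply MemLp.toLp_congr
    have h2 := comp_aeeq hlam hT (Lp.coeFn_smul c f)
    filter_upwards [h2] with x hx
    simp only [G, Pi.smul_apply, smul_eq_mul]
    rw [hx]
    simp only [Pi.smul_apply, smul_eq_mul]
    ring

lemma normA0_sq (hlam : 0 < lam) (hT : 0 < T) (f : Lp ℂ 2 (volume.restrict (Ioc (0:ℝ) T))) :
    ‖A0 hlam hT f‖^2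
      = ((1 - ENNReal.ofReal (Real.exp (-(2*T*lam))))⁻¹ *
          ∫⁻ y in Ioc (0:ℝ) T, ENNReal.ofReal (Real.exp (-(2*lam*y))) * ((‖(f : ℝ → ℂ) y‖₊ : ℝ≥0∞))^2).toReal := by
  show ‖((memG hlam hT f).toLp _ : Lp ℂ 2 (volume.restrict (Ioi (0:ℝ))))‖^2 = _
  rw [Lp.norm_toLp, eLpNorm_two, sq_toReal_rpow_half, J_eq hT]

lemma norm_sq (f : Lp ℂ 2 (volume.restrict (Ioc (0:ℝ) T))) :
    ‖f‖^2 = (∫⁻ x, ((‖(f : ℝ → ℂ) x‖₊ : ℝ≥0∞))^2 ∂(volume.restrict (Ioc (0:ℝ) T))).toReal := by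
  rw [Lp.norm_def, eLpNorm_two, sq_toReal_rpow_half]

lemma inv_toReal (hlam : 0 < lam) (hT : 0 < T) :
    ((1 - ENNReal.ofReal (Real.exp (-(2*T*lam))))⁻¹).toReal
      = 1 / (1 - Real.exp (-(2*T*lam))) := by
  have hr1 : Real.exp (-(2*T*lam)) < 1 := by
    rw [Real.exp_lt_one_iff]; nlinarith
  rw [← ENNReal.ofReal_one, ← ENNReal.ofReal_sub _ (Real.exp_nonneg _),
    ENNReal.toReal_inv, ENNReal.toReal_ofReal (by linarith), one_div]

lemma bound_upper (hlam : 0 < lam) (hT : 0 < T) (f : Lp ℂ 2 (volume.restrict (Ioc (0:ℝ) T))) :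
    ‖A0 hlam hT f‖^2 ≤ (1 / (1 - Real.exp (-(2*T*lam)))) * ‖f‖^2 := by
  rw [normA0_sq hlam hT, norm_sq, ← inv_toReal hlam hT,
    ← ENNReal.toReal_mul]
  apply ENNReal.toReal_mono
  · exact ENNReal.mul_ne_top (inv_one_sub_rho_ne_top hlam hT) (I_ne_top f)
  · exact mul_le_mul_right (inner_le hlam _) _

lemma bound_lower (hlam : 0 < lam) (hT : 0 < T) (f : Lp ℂ 2 (volume.restrict (Ioc (0:ℝ) T))) :
    (Real.exp (-(2*T*lam)) / (1 - Real.exp (-(2*T*lam)))) * ‖f‖^2 ≤ ‖A0 hlam hT f‖^2 := by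
  have hr0 : (0:ℝ) ≤ Real.exp (-(2*T*lam)) := Real.exp_nonneg _
  have hdiv : Real.exp (-(2*T*lam)) / (1 - Real.exp (-(2*T*lam)))
      = (ENNReal.ofReal (Real.exp (-(2*T*lam))) *
          (1 - ENNReal.ofReal (Real.exp (-(2*T*lam))))⁻¹).toReal := by
    rw [ENNReal.toReal_mul, ENNReal.toReal_ofReal hr0, inv_toReal hlam hT]
    ring
  rw [normA0_sq hlam hT, norm_sq, hdiv, ← ENNReal.toReal_mul]
  apply ENNReal.toReal_mono
  · exact ENNReal.mul_ne_top (inv_one_sub_rho_ne_top hlam hT) (K_ne_top hlam f)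
  · calc ENNReal.ofReal (Real.exp (-(2*T*lam))) *
          (1 - ENNReal.ofReal (Real.exp (-(2*T*lam))))⁻¹ *
          ∫⁻ x, ((‖(f : ℝ → ℂ) x‖₊ : ℝ≥0∞))^2 ∂(volume.restrict (Ioc (0:ℝ) T))
        = (1 - ENNReal.ofReal (Real.exp (-(2*T*lam))))⁻¹ *
          (ENNReal.ofReal (Real.exp (-(2*T*lam))) *
            ∫⁻ x, ((‖(f : ℝ → ℂ) x‖₊ : ℝ≥0∞))^2 ∂(volume.restrict (Ioc (0:ℝ) T))) := by ring
      _ ≤ _ := mul_le_mul_right (inner_ge hlam _) _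

lemma sq_le_sqrt_mul {a b c : ℝ} (ha : 0 ≤ a) (hb : 0 ≤ b) (hc : 0 ≤ c)
    (h : a^2 ≤ c * b^2) : a ≤ Real.sqrt c * b := by
  have h1 := Real.sqrt_le_sqrt h
  rwa [Real.sqrt_sq ha, Real.sqrt_mul hc, Real.sqrt_sq hb] at h1

end Stmt17

open Stmt17 in
/-- with `cut x = x − T⌊x/T⌋`, the map
`Af(x) = e^{−λx} f(cut x)` defines a bounded linear operator
`A : L²((0,T], ℂ) → L²((0,∞), ℂ)` with closed range, satisfying
`(e^{−2Tλ}/(1−e^{−2Tλ})) ‖f‖² ≤ ‖Af‖² ≤ (1/(1−e^{−2Tλ})) ‖f‖²`. -/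
theorem stmt17 (lam T : ℝ) (hlam : 0 < lam) (hT : 0 < T) :
    ∃ A : Lp ℂ 2 (volume.restrict (Ioc (0:ℝ) T)) →L[ℂ]
        Lp ℂ 2 (volume.restrict (Ioi (0:ℝ))),
      (∀ f : Lp ℂ 2 (volume.restrict (Ioc (0:ℝ) T)),
        (A f : ℝ → ℂ) =ᵐ[volume.restrict (Ioi (0:ℝ))]
          fun x => Complex.exp (-(lam : ℂ) * (x : ℂ)) *
            (f : ℝ → ℂ) (x - T * (⌊x / T⌋ : ℤ))) ∧
      IsClosed (Set.range A) ∧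
      ∀ f : Lp ℂ 2 (volume.restrict (Ioc (0:ℝ) T)),
        (Real.exp (-(2 * T * lam)) / (1 - Real.exp (-(2 * T * lam)))) * ‖f‖ ^ 2 ≤
            ‖A f‖ ^ 2 ∧
        ‖A f‖ ^ 2 ≤ (1 / (1 - Real.exp (-(2 * T * lam)))) * ‖f‖ ^ 2 := by
  have hr0 : (0:ℝ) < Real.exp (-(2*T*lam)) := Real.exp_pos _
  have hr1 : Real.exp (-(2*T*lam)) < 1 := by
    rw [Real.exp_lt_one_iff]; nlinarith
  have hc0 : (0:ℝ) ≤ 1 / (1 - Real.exp (-(2*T*lam))) :=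
    div_nonneg one_pos.le (by linarith)
  refine ⟨LinearMap.mkContinuous (A0 hlam hT)
      (Real.sqrt (1 / (1 - Real.exp (-(2*T*lam)))))
      (fun f => sq_le_sqrt_mul (norm_nonneg _) (norm_nonneg _) hc0 (bound_upper hlam hT f)),
    ?_, ?_, ?_⟩
  · intro f
    have h := MemLp.coeFn_toLp (memG hlam hT f)
    filter_upwards [h] with x hx
    exact hx
  · have hanti : AntilipschitzWith
        (Real.toNNReal (Real.sqrt ((1 - Real.exp (-(2*T*lam))) / Real.exp (-(2*T*lam)))))
        (LinearMap.mkContinuous (A0 hlam hT)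
          (Real.sqrt (1 / (1 - Real.exp (-(2*T*lam)))))
          (fun f => sq_le_sqrt_mul (norm_nonneg _) (norm_nonneg _) hc0 (bound_upper hlam hT f))) := by
      apply ContinuousLinearMap.antilipschitz_of_bound
      intro f
      rw [Real.coe_toNNReal _ (Real.sqrt_nonneg _)]
      apply sq_le_sqrt_mul (norm_nonneg _) (norm_nonneg _) (div_nonneg (by linarith) hr0.le)
      have h := bound_lower hlam hT f
      rw [LinearMap.mkContinuous_apply] at *
      have h2 := mul_le_mul_of_nonneg_left h (le_of_lt (sub_pos.2 hr1))
      rw [div_mul_eq_mul_div]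
      rw [le_div_iff₀ hr0]
      have e1 : (1 - Real.exp (-(2*T*lam))) * (Real.exp (-(2*T*lam)) / (1 - Real.exp (-(2*T*lam))) * ‖f‖ ^ 2)
          = Real.exp (-(2*T*lam)) * ‖f‖^2 := by
        have hne : (1:ℝ) - Real.exp (-(2*T*lam)) ≠ 0 := by linarith
        field_simp
      rw [e1] at h2
      calc ‖f‖^2 * Real.exp (-(2*T*lam)) = Real.exp (-(2*T*lam)) * ‖f‖^2 := by ring
        _ ≤ (1 - Real.exp (-(2*T*lam))) * ‖A0 hlam hT f‖^2 := h2
    exact (hanti.isClosedEmbedding (ContinuousLinearMap.uniformContinuous _)).isClosed_range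
  · intro f
    exact ⟨bound_lower hlam hT f, bound_upper hlam hT f⟩
end
end
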